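/- Let X ∈ gl_n(ℝ) be a nilpotent matrix which is not regular (i.e. its centralizer in gl_n(ℝ) has dimension strictly greater than n, equivalently X has at least two Jordan blocks). Then there exists a matrix Y ∈ gl_{2n}(ℝ) such that J Yᵀ J⁻¹ = Y, Y commutes with d(X) = diag(X, Xᵀ), tr(Y) = 0, and Y is not nilpotent. -/

import Mathlib

open Matrix Polynomial DirectSum Module

-- block diagonal powers
lemma blockDiag_pow {n : ℕ} (A D : Matrix (Fin n) (Fin n) ℝ) (k : ℕ) :
    (Matrix.fromBlocks A 0 0 D) ^ k = Matrix.fromBlocks (A ^ k) 0 0 (D ^ k) := by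
  induction k with
  | zero => simp [Matrix.fromBlocks_one]
  | succ k ih =>
      rw [pow_succ, pow_succ, pow_succ, ih, Matrix.fromBlocks_multiply]
      simp

lemma trace_fromBlocks' {n : ℕ} (A B C D : Matrix (Fin n) (Fin n) ℝ) :
    (Matrix.fromBlocks A B C D).trace = A.trace + D.trace := by
  simp [Matrix.trace, Matrix.diag, Fintype.sum_sum_type, Matrix.fromBlocks]

lemma key_nonnil (n : ℕ) (hn : 0 < n) (A' : Matrix (Fin n) (Fin n) ℝ) (c : ℝ)
    (hc0 : c ≠ 0) (hc1 : c ≠ 1) (hA'A' : A' * A' = A') :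
    ¬ IsNilpotent (A' - c • 1) := by
  intro hnil
  set A : Matrix (Fin n) (Fin n) ℝ := A' - c • 1 with hAdef
  have hA' : A' = A + c • 1 := by rw [hAdef]; abel
  have heq : (c ^ 2 - c) • (1 : Matrix (Fin n) (Fin n) ℝ)
      = (1 - 2 * c) • A - A * A := by
    have h0 := hA'A'
    rw [hA'] at h0
    have h1 : (A + c • 1) * (A + c • 1)
        = A * A + (2 * c) • A + (c ^ 2) • 1 := by
      rw [add_mul, mul_add, mul_add, Matrix.smul_mul, Matrix.mul_smul,
        Matrix.smul_mul, Matrix.mul_smul, one_mul, mul_one, mul_one, smul_smul]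
      rw [two_mul, add_smul, pow_two]
      abel
    rw [h1] at h0
    have h3 : c ^ 2 • (1 : Matrix (Fin n) (Fin n) ℝ)
        = A + c • 1 - A * A - (2*c) • A := by
      rw [← h0]; abel
    rw [sub_smul, sub_smul, one_smul, h3]
    abel
  have hnil2 : IsNilpotent ((1 - 2 * c) • A - A * A) := by
    obtain ⟨k, hk⟩ := hnil
    have hnA : IsNilpotent ((1 - 2*c) • A) := ⟨k, by rw [_root_.smul_pow, hk, smul_zero]⟩
    have hnAA : IsNilpotent (A * A) := by
      refine ⟨k, ?_⟩
      have : (A * A) ^ k = A ^ k * A ^ k := by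
        rw [← pow_two, ← pow_mul, two_mul, pow_add]
      rw [this, hk, mul_zero]
    have hcomm : Commute ((1 - 2*c) • A) (A * A) :=
      (((Commute.refl A).mul_right (Commute.refl A))).smul_left _
    exact hcomm.isNilpotent_sub hnA hnAA
  rw [← heq] at hnil2
  have hscal : IsNilpotent (c ^ 2 - c) := by
    obtain ⟨k, hk⟩ := hnil2
    refine ⟨k, ?_⟩
    have h6 : ((c ^ 2 - c) • (1 : Matrix (Fin n) (Fin n) ℝ)) ^ k = 0 := hk
    rw [_root_.smul_pow, one_pow] at h6
    have h7 := congrFun (congrFun h6 ⟨0, hn⟩) ⟨0, hn⟩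
    simpa [Matrix.smul_apply, Matrix.one_apply_eq] using h7
  have h9 : c ^ 2 - c = 0 := hscal.eq_zero
  have h10 : c * (c - 1) = 0 := by rw [← h9]; ring
  rcases mul_eq_zero.mp h10 with h | h
  · exact hc0 h
  · exact hc1 (by linarith)

set_option maxHeartbeats 2000000 in
lemma exists_A (n : ℕ) (W : Matrix (Fin n) (Fin n) ℝ) (hW : IsNilpotent W)
    (hreg : ∀ S : Submodule ℝ (Matrix (Fin n) (Fin n) ℝ),
      (S : Set (Matrix (Fin n) (Fin n) ℝ)) = {Y | W * Y = Y * W} →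
      n < Module.finrank ℝ S) :
    ∃ A : Matrix (Fin n) (Fin n) ℝ,
      A * W = W * A ∧ A.trace = 0 ∧ ¬ IsNilpotent A := by
  classical
  -- n = 0 is contradictory
  rcases Nat.eq_zero_or_pos n with hn | hn
  · exfalso
    subst hn
    have hsub : ∀ Y Z : Matrix (Fin 0) (Fin 0) ℝ, Y = Z := by
      intro Y Z; ext i; exact i.elim0
    have h := hreg ⊥ ?_
    · rw [finrank_bot] at h; exact Nat.lt_irrefl 0 h
    · ext Y
      simp only [Submodule.bot_coe, Set.mem_singleton_iff, Set.mem_setOf_eq]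
      constructor
      · intro _; exact hsub _ _
      · intro _; exact hsub _ _
  -- the centralizer as a submodule
  set C : Submodule ℝ (Matrix (Fin n) (Fin n) ℝ) :=
    { carrier := {Y | W * Y = Y * W}
      add_mem' := fun {a b} ha hb => by
        simp only [Set.mem_setOf_eq] at *
        rw [mul_add, add_mul, ha, hb]
      zero_mem' := by simp
      smul_mem' := fun c a ha => by
        simp only [Set.mem_setOf_eq] at *
        rw [mul_smul_comm, smul_mul_assoc, ha] } with hCdef
  have hC : n < Module.finrank ℝ C := hreg C rfl
  have hmemC : ∀ Y : Matrix (Fin n) (Fin n) ℝ, Y ∈ C ↔ W * Y = Y * W := fun Y => Iff.rfl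
  -- the ℝ[X]-module structure
  set V := (Fin n → ℝ)
  set φ : V →ₗ[ℝ] V := Matrix.toLinAlgEquiv' W with hφdef
  set N := Module.AEval' φ with hNdef
  have htors : Module.IsTorsion ℝ[X] N := by
    obtain ⟨k, hk⟩ := hW
    intro m
    refine ⟨⟨(X : ℝ[X]) ^ k, mem_nonZeroDivisors_of_ne_zero (pow_ne_zero _ X_ne_zero)⟩, ?_⟩
    show ((X : ℝ[X]) ^ k) • m = 0
    apply (Module.AEval'.of φ).symm.injective
    rw [Module.AEval.of_symm_smul, map_zero]
    have : Polynomial.aeval φ ((X : ℝ[X]) ^ k) = 0 := by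
      rw [map_pow, aeval_X, hφdef, ← map_pow, hk, map_zero]
    rw [this]
    simp
  obtain ⟨ι, hfin, p, hp, e, ⟨L⟩⟩ := Module.equiv_directSum_of_isTorsion htors
  -- nontriviality of factors
  have hQnt : ∀ i : ι, e i ≠ 0 →
      (Submodule.Quotient.mk 1 : ℝ[X] ⧸ (ℝ[X] ∙ p i ^ e i)) ≠ 0 := by
    intro i hei h
    rw [Submodule.Quotient.mk_eq_zero] at h
    obtain ⟨c, hc⟩ := Submodule.mem_span_singleton.mp h
    have : IsUnit (p i ^ e i) :=
      IsUnit.of_mul_eq_one c (by rwa [smul_eq_mul, mul_comm] at hc)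
    exact (hp i).not_isUnit ((isUnit_pow_iff hei).mp this)
  by_cases hone : ∃ i j : ι, i ≠ j ∧ e i ≠ 0 ∧ e j ≠ 0
  · -- two nontrivial factors : build a projection
    obtain ⟨i, j, hij, hei, hej⟩ := hone
    let Q : ι → Type := fun i => (ℝ[X] ⧸ (ℝ[X] ∙ p i ^ e i))
    let π : (⨁ i, Q i) →ₗ[ℝ[X]] (⨁ i, Q i) :=
      (DirectSum.lof ℝ[X] ι Q i).comp (DirectSum.component ℝ[X] ι Q i)
    let f : N →ₗ[ℝ[X]] N := (L.symm.toLinearMap.comp π).comp L.toLinearMap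
    let g : V →ₗ[ℝ] V :=
      ((Module.AEval'.of φ).symm.toLinearMap.comp (f.restrictScalars ℝ)).comp
        (Module.AEval'.of φ).toLinearMap
    have happ : ∀ w : V, g w = (Module.AEval'.of φ).symm (f (Module.AEval'.of φ w)) :=
      fun _ => rfl
    have hfapp : ∀ x : N, f x = L.symm (π (L x)) := fun _ => rfl
    have hπapp : ∀ x : ⨁ i, Q i, π x = DirectSum.lof ℝ[X] ι Q i
        (DirectSum.component ℝ[X] ι Q i x) := fun _ => rfl
    have hππ : ∀ x : ⨁ i, Q i, π (π x) = π x := by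
      intro x
      rw [hπapp, hπapp x, DirectSum.component.lof_self]
    have hff : ∀ x : N, f (f x) = f x := by
      intro x
      rw [hfapp, hfapp x, LinearEquiv.apply_symm_apply, hππ]
    have hgg : ∀ w : V, g (g w) = g w := by
      intro w
      rw [happ, happ w, LinearEquiv.apply_symm_apply, hff]
    have hgφ : ∀ w : V, g (φ w) = φ (g w) := by
      intro w
      rw [happ, happ w]
      have h1 : Module.AEval'.of φ (φ w) = (X : ℝ[X]) • Module.AEval'.of φ w :=
        (Module.AEval'.X_smul_of φ w).symm
      rw [h1, LinearMap.map_smul, Module.AEval'.of_symm_X_smul]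
    -- the idempotent matrix
    let A' : Matrix (Fin n) (Fin n) ℝ := LinearMap.toMatrixAlgEquiv' g
    have hWmat : LinearMap.toMatrixAlgEquiv' φ = W :=
      LinearMap.toMatrixAlgEquiv'_toLinAlgEquiv' W
    have hA'W : A' * W = W * A' := by
      have h1 : g * φ = φ * g := LinearMap.ext hgφ
      calc A' * W = LinearMap.toMatrixAlgEquiv' (g * φ) := by
            rw [_root_.map_mul, hWmat]
        _ = LinearMap.toMatrixAlgEquiv' (φ * g) := by rw [h1]
        _ = W * A' := by rw [_root_.map_mul, hWmat]
    have hA'A' : A' * A' = A' := by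
      have h1 : g * g = g := LinearMap.ext hgg
      calc A' * A' = LinearMap.toMatrixAlgEquiv' (g * g) := by rw [_root_.map_mul]
        _ = A' := by rw [h1]
    -- the projection facts
    have hproj : LinearMap.IsProj (LinearMap.range g) g := by
      constructor
      · intro x
        exact LinearMap.mem_range_self g x
      · rintro x ⟨y, rfl⟩
        exact hgg y
    have htrg : LinearMap.trace ℝ V g
        = (Module.finrank ℝ (LinearMap.range g) : ℝ) := hproj.trace
    have htrA' : A'.trace = (Module.finrank ℝ (LinearMap.range g) : ℝ) := by
      rw [← htrg, LinearMap.trace_eq_matrix_trace ℝ (Pi.basisFun ℝ (Fin n)) g,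
        LinearMap.toMatrix_eq_toMatrix']
      rfl
    -- rank bounds
    set r : ℕ := Module.finrank ℝ (LinearMap.range g) with hrdef
    have hrange_ne : ∃ w : V, g w = w ∧ w ≠ 0 := by
      refine ⟨(Module.AEval'.of φ).symm (L.symm (DirectSum.lof ℝ[X] ι Q i
        (Submodule.Quotient.mk 1))), ?_, ?_⟩
      · rw [happ, LinearEquiv.apply_symm_apply, hfapp, LinearEquiv.apply_symm_apply,
          hπapp, DirectSum.component.lof_self]
      · intro h
        have h2 : L.symm (DirectSum.lof ℝ[X] ι Q i (Submodule.Quotient.mk 1)) = 0 := by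
          have := congrArg (Module.AEval'.of φ) h
          rwa [LinearEquiv.apply_symm_apply, map_zero] at this
        have h3 : DirectSum.lof ℝ[X] ι Q i (Submodule.Quotient.mk 1)
            = (0 : ⨁ i, Q i) := by
          have := congrArg L h2
          rwa [LinearEquiv.apply_symm_apply, map_zero] at this
        have h4 := congrArg (DirectSum.component ℝ[X] ι Q i) h3
        rw [DirectSum.component.lof_self, map_zero] at h4
        exact hQnt i hei h4
    have hker_ne : ∃ u : V, g u = 0 ∧ u ≠ 0 := by
      refine ⟨(Module.AEval'.of φ).symm (L.symm (DirectSum.lof ℝ[X] ι Q j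
        (Submodule.Quotient.mk 1))), ?_, ?_⟩
      · rw [happ, LinearEquiv.apply_symm_apply, hfapp, LinearEquiv.apply_symm_apply, hπapp]
        have h5 : DirectSum.component ℝ[X] ι Q i
            (DirectSum.lof ℝ[X] ι Q j (Submodule.Quotient.mk 1)) = 0 := by
          rw [DirectSum.component.of]
          rw [dif_neg hij.symm]
        rw [h5, map_zero, map_zero, map_zero]
      · intro h
        have h2 : L.symm (DirectSum.lof ℝ[X] ι Q j (Submodule.Quotient.mk 1)) = 0 := by
          have := congrArg (Module.AEval'.of φ) h
          rwa [LinearEquiv.apply_symm_apply, map_zero] at this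
        have h3 : DirectSum.lof ℝ[X] ι Q j (Submodule.Quotient.mk 1)
            = (0 : ⨁ i, Q i) := by
          have := congrArg L h2
          rwa [LinearEquiv.apply_symm_apply, map_zero] at this
        have h4 := congrArg (DirectSum.component ℝ[X] ι Q j) h3
        rw [DirectSum.component.lof_self, map_zero] at h4
        exact hQnt j hej h4
    have hrpos : 0 < r := by
      obtain ⟨w, hw, hwne⟩ := hrange_ne
      rw [hrdef]
      rw [Module.finrank_pos_iff_exists_ne_zero]
      exact ⟨⟨w, ⟨w, hw⟩⟩, fun hcon => hwne (congrArg Subtype.val hcon)⟩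
    have hrlt : r < n := by
      have hsum : r + Module.finrank ℝ (LinearMap.ker g) = n := by
        rw [hrdef, LinearMap.finrank_range_add_finrank_ker g]
        exact Module.finrank_fin_fun ℝ
      have hkpos : 0 < Module.finrank ℝ (LinearMap.ker g) := by
        obtain ⟨u, hu, hune⟩ := hker_ne
        rw [Module.finrank_pos_iff_exists_ne_zero]
        exact ⟨⟨u, hu⟩, fun hcon => hune (congrArg Subtype.val hcon)⟩
      omega
    -- final construction
    have hn' : (n : ℝ) ≠ 0 := Nat.cast_ne_zero.mpr (by omega)
    set c : ℝ := (r : ℝ) / n with hcdef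
    have hc0 : c ≠ 0 := by
      rw [hcdef]
      positivity
    have hc1 : c ≠ 1 := by
      rw [hcdef]
      intro h
      rw [div_eq_one_iff_eq hn'] at h
      exact absurd (Nat.cast_injective h) (by omega)
    clear_value A'
    refine ⟨A' - c • 1, ?_, ?_, ?_⟩
    · rw [sub_mul, mul_sub, hA'W, Matrix.smul_mul, Matrix.mul_smul, one_mul, mul_one]
    · rw [Matrix.trace_sub, Matrix.trace_smul, Matrix.trace_one, htrA', hcdef]
      simp only [smul_eq_mul, Fintype.card_fin]
      rw [div_mul_cancel₀ _ hn', sub_self]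
    · exact key_nonnil n hn A' c hc0 hc1 hA'A'
  · -- at most one nontrivial factor : module is cyclic, centralizer small
    exfalso
    by_cases hex : ∃ i : ι, e i ≠ 0
    · obtain ⟨i₀, hi₀⟩ := hex
      have hsub : ∀ j : ι, j ≠ i₀ → Subsingleton (ℝ[X] ⧸ (ℝ[X] ∙ p j ^ e j)) := by
        intro j hj
        have : e j = 0 := by
          by_contra hej
          exact hone ⟨j, i₀, hj, hej, hi₀⟩
        rw [Submodule.Quotient.subsingleton_iff, this, pow_zero]
        exact (Ideal.span_singleton_eq_top).mpr isUnit_one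
      -- the direct sum is cyclic with generator g
      set g : ⨁ i : ι, ℝ[X] ⧸ (ℝ[X] ∙ p i ^ e i) :=
        DirectSum.lof ℝ[X] ι _ i₀ (Submodule.Quotient.mk 1) with hgdef
      have hcyc : ∀ x : ⨁ i : ι, ℝ[X] ⧸ (ℝ[X] ∙ p i ^ e i), ∃ q : ℝ[X], x = q • g := by
        intro x
        obtain ⟨q, hq⟩ := Submodule.Quotient.mk_surjective _ (DirectSum.component ℝ[X] ι _ i₀ x)
        refine ⟨q, ?_⟩
        apply DFinsupp.ext
        intro j
        by_cases hj : j = i₀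
        · subst hj
          have h1 : DirectSum.component ℝ[X] ι _ j (q • g) = q • Submodule.Quotient.mk 1 := by
            rw [_root_.map_smul, hgdef, DirectSum.component.lof_self]
          have h2 : (q • Submodule.Quotient.mk 1 : ℝ[X] ⧸ (ℝ[X] ∙ p j ^ e j))
              = Submodule.Quotient.mk q := by
            rw [← Submodule.Quotient.mk_smul]; simp
          show DirectSum.component ℝ[X] ι _ j x = DirectSum.component ℝ[X] ι _ j (q • g)
          rw [h1, h2, ← hq]
        · haveI := hsub j hj
          exact Subsingleton.elim _ _
      -- transfer cyclicity to V
      set v : V := (Module.AEval'.of φ).symm (L.symm g) with hvdef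
      have hcycV : ∀ w : V, ∃ q : ℝ[X], (Polynomial.aeval W q).mulVec v = w := by
        intro w
        obtain ⟨q, hq⟩ := hcyc (L (Module.AEval'.of φ w))
        refine ⟨q, ?_⟩
        have : Module.AEval'.of φ w = q • L.symm g := by
          apply L.injective
          rw [_root_.map_smul, LinearEquiv.apply_symm_apply]
          exact hq
        have h2 : w = Polynomial.aeval φ q • ((Module.AEval'.of φ).symm (L.symm g)) := by
          conv_lhs => rw [← (Module.AEval'.of φ).symm_apply_apply w, this,
            Module.AEval.of_symm_smul]
        rw [h2, ← hvdef]
        have h3 : (Polynomial.aeval φ) q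
            = Matrix.toLinAlgEquiv' ((Polynomial.aeval W) q) := by
          rw [hφdef]
          exact Polynomial.aeval_algHom_apply
            (Matrix.toLinAlgEquiv' : Matrix (Fin n) (Fin n) ℝ ≃ₐ[ℝ] _) W q
        rw [h3]
        exact (Matrix.toLinAlgEquiv'_apply _ _).symm
      -- the evaluation map on the centralizer is injective
      have hmain : Module.finrank ℝ C ≤ n := by
        let F : C →ₗ[ℝ] V :=
          { toFun := fun A => (A : Matrix (Fin n) (Fin n) ℝ).mulVec v
            map_add' := fun a b => by simp [Matrix.add_mulVec]
            map_smul' := fun c a => by simp [Matrix.smul_mulVec] }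
        have hinj : Function.Injective F := by
          rw [← LinearMap.ker_eq_bot, Submodule.eq_bot_iff]
          rintro ⟨A, hA⟩ hA0
          have hA0' : A.mulVec v = 0 := hA0
          have hcomm : ∀ q : ℝ[X], A * Polynomial.aeval W q = Polynomial.aeval W q * A := by
            intro q
            have h1 : Polynomial.aeval W q ∈ Algebra.adjoin ℝ ({W} :
                Set (Matrix (Fin n) (Fin n) ℝ)) := Polynomial.aeval_mem_adjoin_singleton ℝ W
            have h2 : Algebra.adjoin ℝ ({W} : Set (Matrix (Fin n) (Fin n) ℝ)) ≤
                Subalgebra.centralizer ℝ {A} := by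
              apply Algebra.adjoin_le
              intro z hz
              rw [Set.mem_singleton_iff] at hz
              rw [SetLike.mem_coe, Subalgebra.mem_centralizer_iff]
              intro y hy
              rw [Set.mem_singleton_iff] at hy
              rw [hz, hy]
              exact ((hmemC A).mp hA).symm
            have := h2 h1
            rw [Subalgebra.mem_centralizer_iff] at this
            exact this A rfl
          have hAz : ∀ w : V, A.mulVec w = 0 := by
            intro w
            obtain ⟨q, hq⟩ := hcycV w
            rw [← hq, Matrix.mulVec_mulVec, hcomm, ← Matrix.mulVec_mulVec, hA0',
              Matrix.mulVec_zero]
          have : A = 0 := by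
            apply Matrix.toLinAlgEquiv'.injective
            rw [map_zero]
            apply LinearMap.ext
            intro w
            rw [Matrix.toLinAlgEquiv'_apply, hAz w, LinearMap.zero_apply]
          exact Subtype.ext this
        calc Module.finrank ℝ C ≤ Module.finrank ℝ V :=
              LinearMap.finrank_le_finrank_of_injective hinj
          _ = n := Module.finrank_fin_fun ℝ
      omega
    · -- all factors trivial : V is trivial, contradiction with n ≥ 1
      push_neg at hex
      haveI : ∀ i : ι, Subsingleton (ℝ[X] ⧸ (ℝ[X] ∙ p i ^ e i)) := by
        intro i
        rw [Submodule.Quotient.subsingleton_iff, hex i, pow_zero]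
        exact (Ideal.span_singleton_eq_top).mpr isUnit_one
      haveI : Subsingleton (⨁ i : ι, ℝ[X] ⧸ (ℝ[X] ∙ p i ^ e i)) := by
        constructor
        intro a b
        apply DFinsupp.ext
        intro i
        exact Subsingleton.elim _ _
      haveI : Subsingleton N := L.toEquiv.subsingleton
      have : (fun _ => (1:ℝ) : V) = (fun _ => 0 : V) := by
        have := Subsingleton.elim (Module.AEval'.of φ (fun _ => (1:ℝ)))
          (Module.AEval'.of φ (fun _ => (0:ℝ)))
        exact (Module.AEval'.of φ).injective this
      have := congrFun this ⟨0, hn⟩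
      norm_num at this

noncomputable def Jmat (n : ℕ) : Matrix (Fin n ⊕ Fin n) (Fin n ⊕ Fin n) ℝ :=
  Matrix.fromBlocks 0 1 (-1) 0

noncomputable def dmat (n : ℕ) (X : Matrix (Fin n) (Fin n) ℝ) :
    Matrix (Fin n ⊕ Fin n) (Fin n ⊕ Fin n) ℝ :=
  Matrix.fromBlocks X 0 0 Xᵀ

/-- A non-regular nilpotent X (centralizer of dimension > n) yields a non-nilpotent
traceless element of g^σ commuting with d(X). -/
theorem stmt6 (n : ℕ) (X : Matrix (Fin n) (Fin n) ℝ) (hX : IsNilpotent X)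
    (hreg : ∀ S : Submodule ℝ (Matrix (Fin n) (Fin n) ℝ),
      (S : Set (Matrix (Fin n) (Fin n) ℝ)) = {Y | X * Y = Y * X} →
      n < Module.finrank ℝ S) :
    ∃ Y : Matrix (Fin n ⊕ Fin n) (Fin n ⊕ Fin n) ℝ,
      Jmat n * Yᵀ * (Jmat n)⁻¹ = Y ∧
      Y * dmat n X = dmat n X * Y ∧
      Y.trace = 0 ∧
      ¬ IsNilpotent Y := by
  obtain ⟨A, hAX, htr, hnil⟩ := exists_A n X hX hreg
  refine ⟨Matrix.fromBlocks A 0 0 Aᵀ, ?_, ?_, ?_, ?_⟩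
  · have hJinv : (Jmat n)⁻¹ = Matrix.fromBlocks 0 (-1) 1 0 := by
      apply Matrix.inv_eq_right_inv
      simp [Jmat, Matrix.fromBlocks_multiply, Matrix.fromBlocks_one]
    rw [hJinv]
    simp [Jmat, Matrix.fromBlocks_transpose, Matrix.fromBlocks_multiply]
  · simp only [dmat, Matrix.fromBlocks_multiply]
    rw [hAX]
    simp [← Matrix.transpose_mul, hAX]
  · rw [trace_fromBlocks', Matrix.trace_transpose, htr, add_zero]
  · intro ⟨k, hk⟩
    apply hnil
    refine ⟨k, ?_⟩
    rw [blockDiag_pow] at hk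
    have := congrArg Matrix.toBlocks₁₁ hk
    exact (by simpa [Matrix.toBlocks_fromBlocks₁₁] using this :
      A ^ k = Matrix.toBlocks₁₁ (0 : Matrix (Fin n ⊕ Fin n) (Fin n ⊕ Fin n) ℝ))
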